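/- There is a universal constant C > 0 such that for every integer d ≥ 1 and real t > 0 there exist matrices (L^r)_{r=1}^{d²} in M_d with ∑_r L^r (L^r)* ≤ Id, ∑_r (L^r)* L^r ≤ t² Id, and |∑_r ⟨Φ_d, (L^r ⊗ L^r) Φ_d⟩ − t| ≤ C t ln(1 + max(t, t⁻¹)) / (1 + ln d), where Φ_d = Z_d^{-1/2} ∑_{i=1}^d i^{-1/2} e_i ⊗ e_i. -/

import Mathlib

open Matrix Kronecker ComplexOrder

noncomputable def Zd (d : ℕ) : ℝ := ∑ i ∈ Finset.range d, ((i : ℝ) + 1)⁻¹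

noncomputable def zvec (d : ℕ) (i : Fin d) : ℝ :=
  (Real.sqrt (Zd d))⁻¹ * (Real.sqrt ((i : ℝ) + 1))⁻¹

noncomputable def Phi (d : ℕ) (p : Fin d × Fin d) : ℂ :=
  if p.1 = p.2 then (zvec d p.1 : ℂ) else 0


noncomputable def bb (t : ℝ) (i j : ℕ) : ℝ :=
  max 0 (min ((i:ℝ)+1) (t^2*((j:ℝ)+1)) - max (i:ℝ) (t^2*(j:ℝ)))

lemma bb_nonneg (t : ℝ) (i j : ℕ) : 0 ≤ bb t i j := le_max_left _ _

lemma clamp_eq (A B u v : ℝ) (hAB : A ≤ B) (huv : u ≤ v) :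
    max 0 (min B v - max A u) = min B (max A v) - min B (max A u) := by
  simp only [min_def, max_def]
  split_ifs <;> linarith

lemma bb_row_sum (t : ℝ) (d i : ℕ) :
    ∑ j ∈ Finset.range d, bb t i j = min ((i:ℝ)+1) (max (i:ℝ) (t^2*d)) - (i:ℝ) := by
  have h : ∀ j ∈ Finset.range d, bb t i j =
      (fun j : ℕ => min ((i:ℝ)+1) (max (i:ℝ) (t^2*j))) (j+1)
      - (fun j : ℕ => min ((i:ℝ)+1) (max (i:ℝ) (t^2*j))) j := by
    intro j _
    have := clamp_eq (i:ℝ) ((i:ℝ)+1) (t^2*(j:ℝ)) (t^2*((j:ℝ)+1)) (by linarith)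
      (by nlinarith [sq_nonneg t])
    simp only [bb, this]
    push_cast
    ring_nf
  rw [Finset.sum_congr rfl h]
  refine (Finset.sum_range_sub (fun j : ℕ => min ((i:ℝ)+1) (max (i:ℝ) (t^2*j))) d).trans ?_
  simp

lemma bb_col_sum (t : ℝ) (d j : ℕ) :
    ∑ i ∈ Finset.range d, bb t i j = min (t^2*((j:ℝ)+1)) (max (t^2*(j:ℝ)) (d:ℝ)) - t^2*(j:ℝ) := by
  have h : ∀ i ∈ Finset.range d, bb t i j =
      (fun i : ℕ => min (t^2*((j:ℝ)+1)) (max (t^2*(j:ℝ)) (i:ℝ))) (i+1)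
      - (fun i : ℕ => min (t^2*((j:ℝ)+1)) (max (t^2*(j:ℝ)) (i:ℝ))) i := by
    intro i _
    have := clamp_eq (t^2*(j:ℝ)) (t^2*((j:ℝ)+1)) (i:ℝ) ((i:ℝ)+1)
      (by nlinarith [sq_nonneg t]) (by linarith)
    simp only [bb, min_comm ((i:ℝ)+1), max_comm (i:ℝ)] at *
    rw [this]
    push_cast
    ring_nf
  rw [Finset.sum_congr rfl h]
  refine (Finset.sum_range_sub (fun i : ℕ => min (t^2*((j:ℝ)+1)) (max (t^2*(j:ℝ)) (i:ℝ))) d).trans ?_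
  have h1 : max (t^2*(j:ℝ)) ((0:ℕ):ℝ) = t^2*(j:ℝ) := by
    simp [mul_nonneg (sq_nonneg t) (Nat.cast_nonneg j)]
  have h2 : min (t^2*((j:ℝ)+1)) (t^2*(j:ℝ)) = t^2*(j:ℝ) := by
    apply min_eq_right; nlinarith [sq_nonneg t]
  simp only [h1, h2]


noncomputable def Wsum (t : ℝ) (d : ℕ) : ℝ :=
  ∑ i ∈ Finset.range d, ∑ j ∈ Finset.range d,
    bb t i j / (Real.sqrt ((i:ℝ)+1) * Real.sqrt ((j:ℝ)+1))

lemma Zd_pos {d : ℕ} (hd : 1 ≤ d) : 0 < Zd d :=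
  Finset.sum_pos (fun i _ => by positivity) (Finset.nonempty_range_iff.mpr (by omega))

lemma Zd_le (d : ℕ) : Zd d ≤ 1 + Real.log d := by
  have h1 : Zd d = (harmonic d : ℝ) := by
    simp [Zd, harmonic]
  rw [h1]; exact harmonic_le_one_add_log d

lemma Wsum_nonneg (t : ℝ) (d : ℕ) : 0 ≤ Wsum t d := by
  apply Finset.sum_nonneg; intro i _; apply Finset.sum_nonneg; intro j _
  have := bb_nonneg t i j
  positivity

lemma Wsum_le (t : ℝ) (ht : 0 < t) (d : ℕ) : Wsum t d ≤ t * Zd d := by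
  classical
  set s := Finset.range d ×ˢ Finset.range d with hs
  have hW : Wsum t d = ∑ p ∈ s, (Real.sqrt (bb t p.1 p.2) / Real.sqrt ((p.1:ℝ)+1)) *
      (Real.sqrt (bb t p.1 p.2) / Real.sqrt ((p.2:ℝ)+1)) := by
    rw [Finset.sum_product]
    refine Finset.sum_congr rfl fun i _ => Finset.sum_congr rfl fun j _ => ?_
    rw [div_mul_div_comm, Real.mul_self_sqrt (bb_nonneg t i j)]
  have hCS := Finset.sum_mul_sq_le_sq_mul_sq s
    (fun p => Real.sqrt (bb t p.1 p.2) / Real.sqrt ((p.1:ℝ)+1))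
    (fun p => Real.sqrt (bb t p.1 p.2) / Real.sqrt ((p.2:ℝ)+1))
  have hf : ∑ p ∈ s, (Real.sqrt (bb t p.1 p.2) / Real.sqrt ((p.1:ℝ)+1))^2 ≤ Zd d := by
    rw [Finset.sum_product]
    have : ∀ i ∈ Finset.range d,
        ∑ j ∈ Finset.range d, (Real.sqrt (bb t i j) / Real.sqrt ((i:ℝ)+1))^2
          ≤ ((i:ℝ)+1)⁻¹ := by
      intro i _
      have hpos : (0:ℝ) < (i:ℝ)+1 := by positivity
      have : ∑ j ∈ Finset.range d, (Real.sqrt (bb t i j) / Real.sqrt ((i:ℝ)+1))^2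
          = (∑ j ∈ Finset.range d, bb t i j) / ((i:ℝ)+1) := by
        rw [Finset.sum_div]
        refine Finset.sum_congr rfl fun j _ => ?_
        rw [div_pow, Real.sq_sqrt (bb_nonneg t i j), Real.sq_sqrt hpos.le]
      rw [this, div_le_iff₀ hpos, inv_mul_cancel₀ hpos.ne']
      have := bb_row_sum t d i
      have : min ((i:ℝ)+1) (max (i:ℝ) (t^2*d)) - (i:ℝ) ≤ 1 := by
        have := min_le_left ((i:ℝ)+1) (max (i:ℝ) (t^2*d)); linarith
      linarith [bb_row_sum t d i]
    calc _ ≤ ∑ i ∈ Finset.range d, ((i:ℝ)+1)⁻¹ := Finset.sum_le_sum this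
      _ = Zd d := rfl
  have hg : ∑ p ∈ s, (Real.sqrt (bb t p.1 p.2) / Real.sqrt ((p.2:ℝ)+1))^2 ≤ t^2 * Zd d := by
    rw [Finset.sum_product_right]
    have : ∀ j ∈ Finset.range d,
        ∑ i ∈ Finset.range d, (Real.sqrt (bb t i j) / Real.sqrt ((j:ℝ)+1))^2
          ≤ t^2 * ((j:ℝ)+1)⁻¹ := by
      intro j _
      have hpos : (0:ℝ) < (j:ℝ)+1 := by positivity
      have heq : ∑ i ∈ Finset.range d, (Real.sqrt (bb t i j) / Real.sqrt ((j:ℝ)+1))^2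
          = (∑ i ∈ Finset.range d, bb t i j) / ((j:ℝ)+1) := by
        rw [Finset.sum_div]
        refine Finset.sum_congr rfl fun i _ => ?_
        rw [div_pow, Real.sq_sqrt (bb_nonneg t i j), Real.sq_sqrt hpos.le]
      rw [heq, div_le_iff₀ hpos]
      have hcol := bb_col_sum t d j
      have : min (t^2*((j:ℝ)+1)) (max (t^2*(j:ℝ)) (d:ℝ)) - t^2*(j:ℝ) ≤ t^2 := by
        have := min_le_left (t^2*((j:ℝ)+1)) (max (t^2*(j:ℝ)) (d:ℝ)); nlinarith
      have hfin : t^2 * ((j:ℝ)+1)⁻¹ * ((j:ℝ)+1) = t^2 := by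
        field_simp
      rw [hfin]; linarith
    calc _ ≤ ∑ j ∈ Finset.range d, t^2 * ((j:ℝ)+1)⁻¹ := Finset.sum_le_sum this
      _ = t^2 * Zd d := by rw [← Finset.mul_sum]; rfl
  have hsq : (Wsum t d)^2 ≤ (t * Zd d)^2 := by
    rw [hW]
    calc _ ≤ _ := hCS
      _ ≤ Zd d * (t^2 * Zd d) := by
          apply mul_le_mul hf hg (Finset.sum_nonneg fun p _ => sq_nonneg _)
          exact le_trans (Finset.sum_nonneg fun p _ => sq_nonneg _) hf
      _ = (t * Zd d)^2 := by ring
  have h0 : 0 ≤ t * Zd d := by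
    rcases Nat.eq_zero_or_pos d with h|h
    · simp [h, Zd]
    · exact mul_nonneg ht.le (Zd_pos h).le
  calc Wsum t d = Real.sqrt ((Wsum t d)^2) := (Real.sqrt_sq (Wsum_nonneg t d)).symm
    _ ≤ Real.sqrt ((t * Zd d)^2) := Real.sqrt_le_sqrt hsq
    _ = t * Zd d := Real.sqrt_sq h0

lemma term_lb (t : ℝ) (ht : 0 < t) (i j : ℕ) :
    bb t i j * (t/((i:ℝ)+1+t^2)) ≤ bb t i j / (Real.sqrt ((i:ℝ)+1) * Real.sqrt ((j:ℝ)+1)) := by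
  rcases (bb_nonneg t i j).eq_or_lt with h|h
  · rw [← h]; simp
  · have hsupp : t^2*(j:ℝ) < (i:ℝ)+1 := by
      by_contra hc; push_neg at hc
      have hz : bb t i j = 0 := by
        unfold bb
        have h1 := min_le_left ((i:ℝ)+1) (t^2*((j:ℝ)+1))
        have h2 := le_max_right (i:ℝ) (t^2*(j:ℝ))
        have : min ((i:ℝ)+1) (t^2*((j:ℝ)+1)) - max (i:ℝ) (t^2*(j:ℝ)) ≤ 0 := by linarith
        exact max_eq_left this
      rw [hz] at h; exact absurd h (lt_irrefl 0)
    have hi1 : (0:ℝ) < (i:ℝ)+1 := by positivity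
    have hD : Real.sqrt ((i:ℝ)+1) * Real.sqrt ((j:ℝ)+1) ≤ ((i:ℝ)+1+t^2)/t := by
      rw [← Real.sqrt_mul hi1.le]
      have h1 : ((i:ℝ)+1)*((j:ℝ)+1) ≤ (((i:ℝ)+1+t^2)/t)^2 := by
        rw [div_pow, le_div_iff₀ (by positivity)]
        nlinarith [mul_lt_mul_of_pos_left hsupp hi1, sq_nonneg t, hi1]
      calc Real.sqrt (((i:ℝ)+1)*((j:ℝ)+1)) ≤ Real.sqrt ((((i:ℝ)+1+t^2)/t)^2) :=
            Real.sqrt_le_sqrt h1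
        _ = ((i:ℝ)+1+t^2)/t := Real.sqrt_sq (by positivity)
    have hDpos : 0 < Real.sqrt ((i:ℝ)+1) * Real.sqrt ((j:ℝ)+1) := by positivity
    calc bb t i j * (t/((i:ℝ)+1+t^2)) = bb t i j / (((i:ℝ)+1+t^2)/t) := by
          rw [div_div_eq_mul_div, mul_div_assoc]
      _ ≤ bb t i j / (Real.sqrt ((i:ℝ)+1) * Real.sqrt ((j:ℝ)+1)) := by
          apply div_le_div_of_nonneg_left h.le hDpos hD

lemma logN (t : ℝ) (ht : 0 < t) (d : ℕ) (hd : 1 ≤ d) :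
    Real.log d - 2*max 0 (Real.log t⁻¹) ≤ Real.log ((min d (Nat.floor (t^2*(d:ℝ))) : ℕ) + 1 : ℝ) := by
  have hd1 : (1:ℝ) ≤ (d:ℝ) := by exact_mod_cast hd
  rcases le_total 1 t with h|h
  · have hN : min d (Nat.floor (t^2*(d:ℝ))) = d := by
      apply min_eq_left; apply Nat.le_floor
      have h0 : (0:ℝ) ≤ (d:ℝ)*(t^2-1) := mul_nonneg (by linarith) (by nlinarith)
      linarith
    rw [hN]
    have hlog : Real.log d ≤ Real.log ((d:ℝ)+1) := Real.log_le_log (by linarith) (by linarith)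
    have hmax : 0 ≤ 2*max 0 (Real.log t⁻¹) := by positivity
    push_cast
    linarith
  · have hfl : Nat.floor (t^2*(d:ℝ)) ≤ d := Nat.floor_le_of_le (by
      nlinarith [mul_nonneg (show (0:ℝ) ≤ (d:ℝ) by linarith) (show (0:ℝ) ≤ 1-t^2 by nlinarith)])
    have hN : min d (Nat.floor (t^2*(d:ℝ))) = Nat.floor (t^2*(d:ℝ)) := min_eq_right hfl
    rw [hN]
    have h1 : t^2*(d:ℝ) < (Nat.floor (t^2*(d:ℝ)):ℝ)+1 := Nat.lt_floor_add_one _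
    have h2 : Real.log (t^2*(d:ℝ)) ≤ Real.log ((Nat.floor (t^2*(d:ℝ)):ℝ)+1) :=
      Real.log_le_log (by positivity) h1.le
    have h3 : Real.log (t^2*(d:ℝ)) = 2*Real.log t + Real.log d := by
      rw [Real.log_mul (by positivity) (by positivity), Real.log_pow]
      push_cast; ring
    have h4 : max 0 (Real.log t⁻¹) = - Real.log t := by
      rw [Real.log_inv]
      exact max_eq_right (by simpa using Real.log_nonpos ht.le h)
    push_cast
    linarith

lemma Wsum_lb (t : ℝ) (ht : 0 < t) (d : ℕ) (hd : 1 ≤ d) :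
    t * (Real.log d - (2*max 0 (Real.log t⁻¹) + Real.log (1+t^2))) ≤ Wsum t d := by
  set N := min d (Nat.floor (t^2*(d:ℝ))) with hNdef
  have hNd : N ≤ d := min_le_left _ _
  have h1 : ∑ i ∈ Finset.range N, t/((i:ℝ)+1+t^2) ≤ Wsum t d := by
    have hrow : ∀ i ∈ Finset.range N, t/((i:ℝ)+1+t^2) ≤
        ∑ j ∈ Finset.range d, bb t i j / (Real.sqrt ((i:ℝ)+1) * Real.sqrt ((j:ℝ)+1)) := by
      intro i hi
      have hiN := Finset.mem_range.mp hi
      have hfull : ∑ j ∈ Finset.range d, bb t i j = 1 := by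
        rw [bb_row_sum]
        have hile : i+1 ≤ Nat.floor (t^2*(d:ℝ)) := by omega
        have hi1 : (i:ℝ)+1 ≤ t^2*(d:ℝ) := by
          calc (i:ℝ)+1 ≤ (Nat.floor (t^2*(d:ℝ)) : ℝ) := by exact_mod_cast hile
            _ ≤ t^2*(d:ℝ) := Nat.floor_le (by positivity)
        rw [max_eq_right (by linarith), min_eq_left hi1]
        ring
      calc t/((i:ℝ)+1+t^2) = (∑ j ∈ Finset.range d, bb t i j) * (t/((i:ℝ)+1+t^2)) := by
            rw [hfull, one_mul]
        _ = ∑ j ∈ Finset.range d, bb t i j * (t/((i:ℝ)+1+t^2)) := Finset.sum_mul _ _ _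
        _ ≤ _ := Finset.sum_le_sum (fun j _ => term_lb t ht i j)
    calc ∑ i ∈ Finset.range N, t/((i:ℝ)+1+t^2)
        ≤ ∑ i ∈ Finset.range N, ∑ j ∈ Finset.range d,
            bb t i j / (Real.sqrt ((i:ℝ)+1) * Real.sqrt ((j:ℝ)+1)) := Finset.sum_le_sum hrow
      _ ≤ Wsum t d := by
          apply Finset.sum_le_sum_of_subset_of_nonneg (Finset.range_subset_range.mpr hNd)
          intro i _ _
          apply Finset.sum_nonneg; intro j _
          have := bb_nonneg t i j
          positivity
  have h2 : Real.log ((N:ℝ)+1+t^2) - Real.log (1+t^2) ≤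
      ∑ i ∈ Finset.range N, 1/((i:ℝ)+1+t^2) := by
    have hterm : ∀ i ∈ Finset.range N,
        (fun i : ℕ => Real.log ((i:ℝ)+1+t^2)) (i+1) - (fun i : ℕ => Real.log ((i:ℝ)+1+t^2)) i
          ≤ 1/((i:ℝ)+1+t^2) := by
      intro i _
      have hp : (0:ℝ) < (i:ℝ)+1+t^2 := by positivity
      have hp2 : (0:ℝ) < (i:ℝ)+2+t^2 := by positivity
      have hx := Real.log_le_sub_one_of_pos (show (0:ℝ) < ((i:ℝ)+2+t^2)/((i:ℝ)+1+t^2) by positivity)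
      rw [Real.log_div hp2.ne' hp.ne'] at hx
      have : ((i:ℝ)+2+t^2)/((i:ℝ)+1+t^2) - 1 = 1/((i:ℝ)+1+t^2) := by
        field_simp
        ring
      rw [this] at hx
      simp only
      push_cast
      have hcast : ((i:ℝ)+1)+1+t^2 = (i:ℝ)+2+t^2 := by ring
      rw [hcast]
      linarith
    calc Real.log ((N:ℝ)+1+t^2) - Real.log (1+t^2)
        = (fun i : ℕ => Real.log ((i:ℝ)+1+t^2)) N - (fun i : ℕ => Real.log ((i:ℝ)+1+t^2)) 0 := by
          simp
      _ = ∑ i ∈ Finset.range N, ((fun i : ℕ => Real.log ((i:ℝ)+1+t^2)) (i+1)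
            - (fun i : ℕ => Real.log ((i:ℝ)+1+t^2)) i) :=
          (Finset.sum_range_sub (fun i : ℕ => Real.log ((i:ℝ)+1+t^2)) N).symm
      _ ≤ _ := Finset.sum_le_sum hterm
  have h3 : Real.log d - 2*max 0 (Real.log t⁻¹) ≤ Real.log ((N:ℝ)+1+t^2) := by
    have := logN t ht d hd
    have hmono : Real.log ((N:ℝ)+1) ≤ Real.log ((N:ℝ)+1+t^2) :=
      Real.log_le_log (by positivity) (by nlinarith [sq_nonneg t])
    linarith
  calc t * (Real.log d - (2*max 0 (Real.log t⁻¹) + Real.log (1+t^2)))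
      ≤ t * (Real.log ((N:ℝ)+1+t^2) - Real.log (1+t^2)) := by
        apply mul_le_mul_of_nonneg_left _ ht.le
        linarith
    _ ≤ t * ∑ i ∈ Finset.range N, 1/((i:ℝ)+1+t^2) := mul_le_mul_of_nonneg_left h2 ht.le
    _ = ∑ i ∈ Finset.range N, t/((i:ℝ)+1+t^2) := by
        rw [Finset.mul_sum]
        exact Finset.sum_congr rfl fun i _ => by ring
    _ ≤ Wsum t d := h1

lemma key (d : ℕ) (t : ℝ) (hd : 1 ≤ d) (ht : 0 < t) :
    |(Zd d)⁻¹ * Wsum t d - t| ≤ 10 * t * Real.log (1 + max t t⁻¹) / (1 + Real.log d) := by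
  set A := 2*max 0 (Real.log t⁻¹) + Real.log (1+t^2) with hA
  have hd1 : (1:ℝ) ≤ (d:ℝ) := by exact_mod_cast hd
  have hlogd : 0 ≤ Real.log d := Real.log_nonneg hd1
  have hden : (0:ℝ) < 1 + Real.log d := by linarith
  have hZ0 : 0 < Zd d := Zd_pos hd
  have hZle : Zd d ≤ 1 + Real.log d := Zd_le d
  have hA0 : 0 ≤ A := by
    have h1 : (0:ℝ) ≤ max 0 (Real.log t⁻¹) := le_max_left _ _
    have h2 : 0 ≤ Real.log (1+t^2) := Real.log_nonneg (by nlinarith)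
    rw [hA]
    linarith
  set V := (Zd d)⁻¹ * Wsum t d with hV
  have hVt : V ≤ t := by
    have := Wsum_le t ht d
    calc V ≤ (Zd d)⁻¹ * (t * Zd d) := by
          apply mul_le_mul_of_nonneg_left this (by positivity)
      _ = t := by field_simp
  have hV0 : 0 ≤ V := mul_nonneg (by positivity) (Wsum_nonneg t d)
  -- step: t - V ≤ t*(1+A)/(1+log d)
  have hmain : t - V ≤ t * (1+A) / (1 + Real.log d) := by
    rcases le_total (Real.log d) A with hcase|hcase
    · calc t - V ≤ t := by linarith
        _ ≤ t * (1+A) / (1 + Real.log d) := by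
          rw [le_div_iff₀ hden]
          nlinarith
    · have hlb := Wsum_lb t ht d hd
      have hWnn : 0 ≤ t * (Real.log d - A) := by
        apply mul_nonneg ht.le; linarith
      have hVlb : t * (Real.log d - A) / (1 + Real.log d) ≤ V := by
        rw [hV]
        calc t * (Real.log d - A) / (1 + Real.log d)
            ≤ t * (Real.log d - A) / Zd d := by
              apply div_le_div_of_nonneg_left hWnn hZ0 hZle
          _ ≤ (Zd d)⁻¹ * Wsum t d := by
              rw [div_eq_inv_mul]
              apply mul_le_mul_of_nonneg_left _ (by positivity)
              rw [hA]; exact hlb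
      rw [div_eq_inv_mul] at hVlb ⊢
      have : t - (1 + Real.log d)⁻¹ * (t * (Real.log d - A)) = (1 + Real.log d)⁻¹ * (t * (1+A)) := by
        field_simp
        ring
      linarith
  -- step: 1 + A ≤ 10 * log(1+max)
  set M := max t t⁻¹ with hM
  have hM1 : 1 ≤ M := by
    rcases le_total 1 t with h|h
    · exact le_trans h (le_max_left _ _)
    · exact le_trans (one_le_inv_iff₀.mpr ⟨ht, h⟩) (le_max_right _ _)
  have hlog2 : Real.log 2 ≤ Real.log (1+M) := Real.log_le_log (by norm_num) (by linarith)
  have h2l2 : (1:ℝ) ≤ 2 * Real.log 2 := by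
    have := Real.log_two_gt_d9
    linarith
  have hMlog0 : 0 < Real.log (1+M) := by
    have := Real.log_pos (show (1:ℝ) < 1+M by linarith)
    exact this
  have hbound : 1 + A ≤ 10 * Real.log (1+M) := by
    rcases le_total 1 t with h|h
    · have hmax0 : max 0 (Real.log t⁻¹) = 0 := by
        apply max_eq_left
        rw [Real.log_inv]
        have := Real.log_nonneg h
        linarith
      have hlt : Real.log (1+t^2) ≤ 2 * Real.log (1+t) := by
        have h1 : Real.log (1+t^2) ≤ Real.log ((1+t)^2) := Real.log_le_log (by positivity) (by nlinarith)
        rw [Real.log_pow] at h1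
        push_cast at h1
        linarith
      have htM : Real.log (1+t) ≤ Real.log (1+M) := Real.log_le_log (by linarith) (by
        have : t ≤ M := le_max_left _ _
        linarith)
      rw [hA, hmax0]
      linarith
    · have hmax0 : max 0 (Real.log t⁻¹) = Real.log t⁻¹ := by
        apply max_eq_right
        rw [Real.log_inv]
        have := Real.log_nonpos ht.le h
        linarith
      have hlt : Real.log (1+t^2) ≤ Real.log 2 := Real.log_le_log (by positivity) (by nlinarith)
      have htM : Real.log t⁻¹ ≤ Real.log (1+M) := Real.log_le_log (by positivity) (by
        have : t⁻¹ ≤ M := le_max_right _ _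
        linarith)
      rw [hA, hmax0]
      linarith
  have habs : |V - t| = t - V := by
    rw [abs_of_nonpos (by linarith)]; ring
  rw [habs]
  calc t - V ≤ t * (1+A) / (1 + Real.log d) := hmain
    _ ≤ 10 * t * Real.log (1+M) / (1 + Real.log d) := by
        rw [div_le_div_iff_of_pos_right hden]
        nlinarith


variable {d : ℕ}

lemma stdBasis_conjT (i j : Fin d) (c : ℂ) :
    (Matrix.single i j c)ᴴ = Matrix.single j i ((starRingEnd ℂ) c) := by
  ext a b
  simp only [Matrix.conjTranspose_apply, Matrix.single, Matrix.of_apply]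
  split_ifs with h1 h2 h2 <;> simp_all <;> tauto

lemma diag_sum (f : Fin d × Fin d → ℂ) :
    ∑ r : Fin d × Fin d, Matrix.single r.1 r.1 (f r)
      = Matrix.diagonal (fun i => ∑ j : Fin d, f (i,j)) := by
  ext a b
  rw [Matrix.sum_apply]
  rw [Fintype.sum_prod_type]
  by_cases hab : a = b
  · subst hab
    simp [Matrix.single, Matrix.diagonal]
  · simp only [Matrix.diagonal, Matrix.of_apply, if_neg hab]
    apply Finset.sum_eq_zero; intro i _
    apply Finset.sum_eq_zero; intro j _
    rw [Matrix.single_apply_of_ne]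
    rintro ⟨h1, h2⟩
    exact hab (h1.symm.trans h2)


lemma value_eq (c : ℂ) (i j : Fin d) :
    star (Phi d) ⬝ᵥ ((((Matrix.single i j c) ⊗ₖ (Matrix.single i j c))).mulVec (Phi d))
      = (zvec d i : ℂ) * (zvec d j) * c^2 := by
  simp only [dotProduct, Matrix.mulVec, Fintype.sum_prod_type, Matrix.kroneckerMap_apply,
    Matrix.single, Matrix.of_apply, Phi, Pi.star_apply]
  simp [Finset.mul_sum, ite_mul, mul_ite, Finset.sum_ite_eq, Finset.sum_ite_eq',
    apply_ite (starRingEnd ℂ), Complex.conj_ofReal]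
  simp only [← ite_and]
  rw [Fintype.sum_eq_single i (fun x hx => Finset.sum_eq_zero fun x1 _ =>
    Finset.sum_eq_zero fun x2 _ => if_neg (by intro hc; apply hx; tauto))]
  rw [Fintype.sum_eq_single i (fun x1 hx => Finset.sum_eq_zero fun x2 _ =>
    if_neg (by intro hc; apply hx; tauto))]
  rw [Fintype.sum_eq_single j (fun x2 hx =>
    if_neg (by intro hc; apply hx; tauto))]
  rw [if_pos (by tauto)]
  ring


lemma diag_sum' (f : Fin d × Fin d → ℂ) :
    ∑ r : Fin d × Fin d, Matrix.single r.2 r.2 (f r)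
      = Matrix.diagonal (fun j => ∑ i : Fin d, f (i,j)) := by
  have h := Equiv.sum_comp (Equiv.prodComm (Fin d) (Fin d))
    (fun r : Fin d × Fin d => Matrix.single r.2 r.2 (f r))
  rw [← h]
  simp only [Equiv.prodComm_apply, Prod.snd_swap, Prod.fst_swap]
  exact diag_sum (fun r : Fin d × Fin d => f (r.2, r.1))

theorem exists_line_matrices :
    ∃ C : ℝ, 0 < C ∧ ∀ (d : ℕ) (t : ℝ), 1 ≤ d → 0 < t →
      ∃ L : Fin d × Fin d → Matrix (Fin d) (Fin d) ℂ,
        ((1 : Matrix (Fin d) (Fin d) ℂ) - ∑ r : Fin d × Fin d, L r * (L r)ᴴ).PosSemidef ∧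
        (((t : ℂ) ^ 2 • (1 : Matrix (Fin d) (Fin d) ℂ)) -
            ∑ r : Fin d × Fin d, (L r)ᴴ * L r).PosSemidef ∧
        ‖(∑ r : Fin d × Fin d,
            (star (Phi d) ⬝ᵥ ((L r ⊗ₖ L r).mulVec (Phi d)))) - (t : ℂ)‖ ≤
          C * t * Real.log (1 + max t t⁻¹) / (1 + Real.log d) := by
  refine ⟨10, by norm_num, ?_⟩
  intro d t hd ht
  set c : Fin d → Fin d → ℂ := fun i j => ((Real.sqrt (bb t i j) : ℝ) : ℂ) with hc
  refine ⟨fun r => Matrix.single r.1 r.2 (c r.1 r.2), ?_, ?_, ?_⟩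
  · -- first PSD
    have hLL : ∀ r : Fin d × Fin d,
        Matrix.single r.1 r.2 (c r.1 r.2) * (Matrix.single r.1 r.2 (c r.1 r.2))ᴴ
          = Matrix.single r.1 r.1 ((bb t r.1 r.2 : ℝ) : ℂ) := by
      intro r
      rw [stdBasis_conjT, Matrix.single_mul_single_same]
      congr 1
      rw [hc]
      simp only [Complex.conj_ofReal, ← Complex.ofReal_mul,
        Real.mul_self_sqrt (bb_nonneg t _ _)]
    simp only [hLL]
    rw [diag_sum (fun r : Fin d × Fin d => ((bb t r.1 r.2 : ℝ) : ℂ))]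
    rw [show (1 : Matrix (Fin d) (Fin d) ℂ)
        - Matrix.diagonal (fun i : Fin d => ∑ j : Fin d, ((bb t i j : ℝ) : ℂ))
        = Matrix.diagonal (fun i : Fin d => 1 - ∑ j : Fin d, ((bb t i j : ℝ) : ℂ)) by
      rw [← Matrix.diagonal_one, Matrix.diagonal_sub]]
    apply Matrix.PosSemidef.diagonal
    intro i
    simp only [Pi.zero_apply]
    show (0:ℂ) ≤ 1 - ∑ j : Fin d, ((bb t (i:ℕ) (j:ℕ) : ℝ) : ℂ)
    have hsum : ∑ j : Fin d, ((bb t i j : ℝ) : ℂ) = ((∑ j ∈ Finset.range d, bb t (i:ℕ) j : ℝ) : ℂ) := by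
      push_cast
      rw [Fin.sum_univ_eq_sum_range (fun j => ((bb t (i:ℕ) j : ℝ) : ℂ)) d]
    have hle : ∑ j ∈ Finset.range d, bb t (i:ℕ) j ≤ 1 := by
      rw [bb_row_sum]
      have := min_le_left (((i:ℕ):ℝ)+1) (max ((i:ℕ):ℝ) (t^2*d))
      linarith
    rw [hsum, show (1:ℂ) - ((∑ j ∈ Finset.range d, bb t (i:ℕ) j : ℝ) : ℂ)
        = ((1 - ∑ j ∈ Finset.range d, bb t (i:ℕ) j : ℝ) : ℂ) by push_cast; ring]
    rw [Complex.zero_le_real]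
    linarith
  · -- second PSD
    have hHL : ∀ r : Fin d × Fin d,
        (Matrix.single r.1 r.2 (c r.1 r.2))ᴴ * Matrix.single r.1 r.2 (c r.1 r.2)
          = Matrix.single r.2 r.2 ((bb t r.1 r.2 : ℝ) : ℂ) := by
      intro r
      rw [stdBasis_conjT, Matrix.single_mul_single_same]
      congr 1
      rw [hc]
      simp only [Complex.conj_ofReal, ← Complex.ofReal_mul,
        Real.mul_self_sqrt (bb_nonneg t _ _)]
    simp only [hHL]
    rw [diag_sum' (fun r : Fin d × Fin d => ((bb t r.1 r.2 : ℝ) : ℂ))]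
    rw [show ((t:ℂ)^2 • (1 : Matrix (Fin d) (Fin d) ℂ))
        - Matrix.diagonal (fun j : Fin d => ∑ i : Fin d, ((bb t i j : ℝ) : ℂ))
        = Matrix.diagonal (fun j : Fin d => (t:ℂ)^2 - ∑ i : Fin d, ((bb t i j : ℝ) : ℂ)) by
      ext a b
      by_cases hab : a = b <;>
        simp [Matrix.sub_apply, Matrix.smul_apply, Matrix.one_apply, Matrix.diagonal, hab]]
    apply Matrix.PosSemidef.diagonal
    intro j
    simp only [Pi.zero_apply]
    show (0:ℂ) ≤ (t:ℂ)^2 - ∑ i : Fin d, ((bb t (i:ℕ) (j:ℕ) : ℝ) : ℂ)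
    have hsum : ∑ i : Fin d, ((bb t (i:ℕ) (j:ℕ) : ℝ) : ℂ)
        = ((∑ i ∈ Finset.range d, bb t i (j:ℕ) : ℝ) : ℂ) := by
      push_cast
      rw [Fin.sum_univ_eq_sum_range (fun i => ((bb t i (j:ℕ) : ℝ) : ℂ)) d]
    have hle : ∑ i ∈ Finset.range d, bb t i (j:ℕ) ≤ t^2 := by
      rw [bb_col_sum]
      have := min_le_left (t^2*(((j:ℕ):ℝ)+1)) (max (t^2*((j:ℕ):ℝ)) ((d:ℕ):ℝ))
      nlinarith
    rw [hsum, show ((t:ℂ))^2 - ((∑ i ∈ Finset.range d, bb t i (j:ℕ) : ℝ) : ℂ)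
        = ((t^2 - ∑ i ∈ Finset.range d, bb t i (j:ℕ) : ℝ) : ℂ) by push_cast; ring]
    rw [Complex.zero_le_real]
    linarith
  · -- value estimate
    have hval : ∀ r : Fin d × Fin d,
        star (Phi d) ⬝ᵥ (((Matrix.single r.1 r.2 (c r.1 r.2))
            ⊗ₖ (Matrix.single r.1 r.2 (c r.1 r.2))).mulVec (Phi d))
          = ((zvec d r.1 * zvec d r.2 * bb t r.1 r.2 : ℝ) : ℂ) := by
      intro r
      rw [value_eq]
      rw [hc]
      rw [show (((Real.sqrt (bb t r.1 r.2) : ℝ) : ℂ))^2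
          = ((bb t r.1 r.2 : ℝ) : ℂ) by
        rw [← Complex.ofReal_pow, Real.sq_sqrt (bb_nonneg t _ _)]]
      push_cast
      ring
    simp only [hval]
    rw [← Complex.ofReal_sum]
    have hreal : ∑ r : Fin d × Fin d, zvec d r.1 * zvec d r.2 * bb t r.1 r.2
        = (Zd d)⁻¹ * Wsum t d := by
      have hZZ : (Real.sqrt (Zd d))⁻¹ * (Real.sqrt (Zd d))⁻¹ = (Zd d)⁻¹ := by
        rw [← mul_inv, Real.mul_self_sqrt (Zd_pos hd).le]
      rw [Fintype.sum_prod_type, Wsum, Finset.mul_sum]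
      show (∑ x : Fin d, ∑ y : Fin d, zvec d x * zvec d y * bb t (x:ℕ) (y:ℕ)) = _
      calc ∑ x : Fin d, ∑ y : Fin d, zvec d x * zvec d y * bb t (x:ℕ) (y:ℕ)
          = ∑ x : Fin d, ∑ y : Fin d, (Zd d)⁻¹ *
              (bb t (x:ℕ) (y:ℕ) / (Real.sqrt (((x:ℕ):ℝ)+1) * Real.sqrt (((y:ℕ):ℝ)+1))) := by
            refine Finset.sum_congr rfl fun x _ => Finset.sum_congr rfl fun y _ => ?_
            rw [zvec, zvec, div_eq_mul_inv, mul_inv, ← hZZ]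
            ring
        _ = ∑ x : Fin d, ∑ y ∈ Finset.range d, (Zd d)⁻¹ *
              (bb t (x:ℕ) y / (Real.sqrt (((x:ℕ):ℝ)+1) * Real.sqrt ((y:ℝ)+1))) := by
            refine Finset.sum_congr rfl fun x _ => ?_
            exact Fin.sum_univ_eq_sum_range (fun y : ℕ => (Zd d)⁻¹ *
              (bb t (x:ℕ) y / (Real.sqrt (((x:ℕ):ℝ)+1) * Real.sqrt ((y:ℝ)+1)))) d
        _ = ∑ x ∈ Finset.range d, ∑ y ∈ Finset.range d, (Zd d)⁻¹ *
              (bb t x y / (Real.sqrt ((x:ℝ)+1) * Real.sqrt ((y:ℝ)+1))) := by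
            exact Fin.sum_univ_eq_sum_range (fun x : ℕ => ∑ y ∈ Finset.range d, (Zd d)⁻¹ *
              (bb t x y / (Real.sqrt ((x:ℝ)+1) * Real.sqrt ((y:ℝ)+1)))) d
        _ = ∑ x ∈ Finset.range d, (Zd d)⁻¹ *
              ∑ y ∈ Finset.range d, bb t x y / (Real.sqrt ((x:ℝ)+1) * Real.sqrt ((y:ℝ)+1)) := by
            exact Finset.sum_congr rfl fun x _ => (Finset.mul_sum _ _ _).symm
    rw [hreal]
    rw [show (((Zd d)⁻¹ * Wsum t d : ℝ) : ℂ) - (t:ℂ)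
        = (((Zd d)⁻¹ * Wsum t d - t : ℝ) : ℂ) by push_cast; ring]
    rw [Complex.norm_real, Real.norm_eq_abs]
    exact key d t hd ht
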